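/- Let (A,⦃-,-⦄,w) be a noncommutative Hamiltonian space with w = Σ_{i∈I} w_i, and let E_i := ⦃w_i,−⦄ : A → A⊗A be the gauge elements. Fix a dimension vector d. For a double derivation Θ, define derivations Θ_{p,q} of 𝕂[Rep^A_d] by Θ_{p,q}(a_{u,v}) := (Θ'(a))_{u,q}(Θ''(a))_{p,v}. Then for every i ∈ I, all indices p,q, and every a ∈ A with e_{t(a)} a e_{s(a)} = a, one has (E_i)_{p,q}(a_{u,v}) = δ_{s(a),i}δ_{p,v} a_{u,q} − δ_{t(a),i}δ_{u,q} a_{p,v}; that is, (E_i)_{p,q} acts on 𝕂[Rep^A_d] as the elementary matrix e^i_{q,p} ∈ gl_d(𝕂) under the infinitesimal conjugation action. -/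
import Mathlib


/-! STATEMENT 2: the gauge elements E_i = ⦃w_i,−⦄ act on matrix coefficient functions of
Rep^A_d by (E_i)_{p,q}(a_{u,v}) = δ_{s(a),i}δ_{p,v}a_{u,q} − δ_{t(a),i}δ_{u,q}a_{p,v},
i.e. as the elementary matrix e^i_{q,p} under the infinitesimal conjugation action.
Here Θ_{p,q}(a_{u,v}) := (Θ′(a))_{u,q}(Θ″(a))_{p,v} for a double derivation Θ. -/

set_option synthInstance.maxHeartbeats 1000000
set_option maxHeartbeats 2000000

open TensorProduct

noncomputable section

variable (K : Type) [Field K]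

/-- The cyclic permutation `x ⊗ y ⊗ z ↦ y ⊗ z ⊗ x` on the triple tensor product. -/
def cyc132 (A : Type) [Ring A] [Algebra K A] :
    A ⊗[K] (A ⊗[K] A) →ₗ[K] A ⊗[K] (A ⊗[K] A) :=
  (TensorProduct.assoc K A A A).toLinearMap ∘ₗ
    (TensorProduct.comm K A (A ⊗[K] A)).toLinearMap

/-- `⦃b, u ⊗ v⦄_L = ⦃b, u⦄ ⊗ v`. -/
def brExtL (A : Type) [Ring A] [Algebra K A]
    (f : A →ₗ[K] A ⊗[K] A) : A ⊗[K] A →ₗ[K] A ⊗[K] (A ⊗[K] A) :=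
  (TensorProduct.assoc K A A A).toLinearMap ∘ₗ TensorProduct.map f LinearMap.id

/-- Outer bimodule structure: left multiplication `b · (u ⊗ v) = bu ⊗ v`. -/
def outL (A : Type) [Ring A] [Algebra K A] (b : A) :
    A ⊗[K] A →ₗ[K] A ⊗[K] A :=
  TensorProduct.map (LinearMap.mulLeft K b) LinearMap.id

/-- Outer bimodule structure: right multiplication `(u ⊗ v) · c = u ⊗ vc`. -/
def outR (A : Type) [Ring A] [Algebra K A] (c : A) :
    A ⊗[K] A →ₗ[K] A ⊗[K] A :=
  TensorProduct.map LinearMap.id (LinearMap.mulRight K c)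

/-- A double Poisson bracket (Van den Bergh) on an `R`-algebra `A`,
where `R = ⊕_{i ∈ I} 𝕂 e_i` is encoded by the family of idempotents `e : I → A`;
`R`-bilinearity is encoded by the vanishing `⦃e_i, -⦄ = 0`. -/
structure DoubleBracket (I : Type) (A : Type) [Ring A] [Algebra K A] (e : I → A) where
  br : A →ₗ[K] A →ₗ[K] A ⊗[K] A
  skew : ∀ a b : A, br a b = - (TensorProduct.comm K A A) (br b a)
  leibniz : ∀ a b c : A,
    br a (b * c) = outR K A c (br a b) + outL K A b (br a c)
  jacobi : ∀ a b c : A,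
    brExtL K A (br a) (br b c)
      + cyc132 K A (brExtL K A (br c) (br a b))
      + cyc132 K A (cyc132 K A (brExtL K A (br b) (br c a))) = 0
  e_vanish : ∀ (i : I) (a : A), br (e i) a = 0

/-- The span of commutators `[A,A]`. -/
def commSpan (A : Type) [Ring A] [Algebra K A] : Submodule K A :=
  Submodule.span K {x : A | ∃ a b : A, x = a * b - b * a}

/-- Zeroth Hochschild homology `HH₀(A) = A/[A,A]`. -/
abbrev HH0 (A : Type) [Ring A] [Algebra K A] := A ⧸ commSpan K A

section RepSpaces

variable (I : Type) [Fintype I] [DecidableEq I]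
variable (A : Type) [Ring A] [Algebra K A]
variable (e : I → A) (d : I → ℕ)

/-- The index set of the vector space `⊕_{i ∈ I} 𝕂^{d_i}`. -/
abbrev Nidx := Σ i : I, Fin (d i)

/-- The projection onto the `i`-th block, as a matrix. -/
def blockOne (i : I) : Matrix (Nidx I d) (Nidx I d) K :=
  Matrix.diagonal fun x => if x.1 = i then 1 else 0

/-- The representation space `Rep^A_d`: algebra maps `ρ : A → End(⊕_i 𝕂^{d_i})`
with `ρ(e_i)` the projection onto the `i`-th summand. -/
def RepSp :=
  {ρ : A →ₐ[K] Matrix (Nidx I d) (Nidx I d) K // ∀ i : I, ρ (e i) = blockOne K I d i}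

/-- The matrix coefficient function `a_{P,Q} : ρ ↦ ρ(a)_{P,Q}` on `Rep^A_d`. -/
def cf (a : A) (P Q : Nidx I d) : RepSp K I A e d → K :=
  fun ρ => ρ.1 a P Q

/-- The coordinate ring of `Rep^A_d`, generated by the matrix coefficient functions. -/
def coordRing : Subalgebra K (RepSp K I A e d → K) :=
  Algebra.adjoin K {f | ∃ (a : A) (P Q : Nidx I d), f = cf K I A e d a P Q}

theorem cf_mem (a : A) (P Q : Nidx I d) :
    cf K I A e d a P Q ∈ coordRing K I A e d :=
  Algebra.subset_adjoin ⟨a, P, Q, rfl⟩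

/-- The bilinear map `(x, y) ↦ ((ρ ↦ ρ(x)_{U,Q} · ρ(y)_{P,V}))`, used to express
`⦃a,b⦄'_{u,j} ⦃a,b⦄''_{i,v}` on a Sweedler decomposition. -/
def pairFn (P Q U V : Nidx I d) :
    A →ₗ[K] A →ₗ[K] (RepSp K I A e d → K) :=
  LinearMap.mk₂ K (fun x y => cf K I A e d x U Q * cf K I A e d y P V)
    (fun x x' y => by
      funext ρ; simp [cf, map_add, Matrix.add_apply, add_mul])
    (fun c x y => by
      funext ρ; simp [cf, map_smul, Matrix.smul_apply, smul_eq_mul, mul_assoc])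
    (fun x y y' => by
      funext ρ; simp [cf, map_add, Matrix.add_apply, mul_add])
    (fun c x y => by
      funext ρ
      simp [cf, map_smul, Matrix.smul_apply, smul_eq_mul]
      ring)

/-- The function `ρ ↦ Σ (ρ t')_{U,Q} (ρ t'')_{P,V}` for `t ∈ A ⊗ A` (Sweedler sums). -/
def brFn (t : A ⊗[K] A) (P Q U V : Nidx I d) : RepSp K I A e d → K :=
  TensorProduct.lift (pairFn K I A e d P Q U V) t

end RepSpaces

theorem statement2
    (I : Type) [Fintype I] [DecidableEq I]
    (A : Type) [Ring A] [Algebra K A]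
    (e : I → A) (d : I → ℕ)
    (h_idem : ∀ i, e i * e i = e i)
    (h_orth : ∀ i j, i ≠ j → e i * e j = 0)
    (h_sum : (Finset.univ.sum fun i => e i) = 1)
    (D : DoubleBracket K I A e)
    -- `w = Σᵢ wᵢ` is a noncommutative moment map, with `wᵢ = eᵢ w eᵢ ∈ eᵢAeᵢ`:
    (w : A)
    (h_w_diag : w = Finset.univ.sum fun i => e i * w * e i)
    (h_mom : ∀ p : A,
      D.br w p = Finset.univ.sum fun i =>
        ((p * e i) ⊗ₜ[K] (e i) - (e i) ⊗ₜ[K] (e i * p))) :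
    ∀ (i : I) (p q : Fin (d i)) (a : A) (sa ta : I)
      (_ : e ta * a * e sa = a) (U V : Nidx I d),
      -- `(E_i)_{p,q}(a_{U,V})`, where `E_i := ⦃wᵢ, −⦄` and
      -- `Θ_{p,q}(a_{u,v}) := (Θ'(a))_{u,q} (Θ''(a))_{p,v}`:
      brFn K I A e d (D.br (e i * w * e i) a) ⟨i, p⟩ ⟨i, q⟩ U V
        = (if V = (⟨i, p⟩ : Nidx I d) then cf K I A e d a U ⟨i, q⟩ else 0)
          - (if U = (⟨i, q⟩ : Nidx I d) then cf K I A e d a ⟨i, p⟩ V else 0) := by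
  intro i p q a sa ta _ U V
  -- Step 1: ⦃a, e i⦄ = 0
  have h1 : D.br a (e i) = 0 := by
    rw [D.skew a (e i), D.e_vanish i a]; simp
  -- Step 2: ⦃a, w⦄ = Σ_j (e_j a ⊗ e_j - e_j ⊗ a e_j)
  have h2 : D.br a w = Finset.univ.sum fun j =>
      ((e j * a) ⊗ₜ[K] (e j) - (e j) ⊗ₜ[K] (a * e j)) := by
    rw [D.skew a w, h_mom a, map_sum, ← Finset.sum_neg_distrib]
    refine Finset.sum_congr rfl fun j _ => ?_
    simp [TensorProduct.comm_tmul, neg_sub]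
  -- Step 3: ⦃a, e_i w e_i⦄ = e_i a ⊗ e_i - e_i ⊗ a e_i
  have h3 : D.br a (e i * w * e i) =
      (e i * a) ⊗ₜ[K] (e i) - (e i) ⊗ₜ[K] (a * e i) := by
    rw [D.leibniz a (e i * w) (e i), h1]
    rw [D.leibniz a (e i) w, h1, h2]
    simp only [map_zero, zero_add, map_sum, add_zero, outL, outR, map_sub,
      TensorProduct.map_tmul, LinearMap.mulLeft_apply, LinearMap.mulRight_apply,
      LinearMap.id_coe, id_eq]
    rw [Finset.sum_eq_single i]
    · rw [mul_assoc a (e i) (e i), h_idem i, ← mul_assoc (e i) (e i) a, h_idem i]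
    · intro j _ hj
      rw [← mul_assoc (e i) (e j) a, h_orth i j (fun h => hj h.symm)]
      simp
    · intro h; exact absurd (Finset.mem_univ i) h
  -- Step 4: ⦃e_i w e_i, a⦄ = a e_i ⊗ e_i - e_i ⊗ e_i a
  have h4 : D.br (e i * w * e i) a =
      (a * e i) ⊗ₜ[K] (e i) - (e i) ⊗ₜ[K] (e i * a) := by
    rw [D.skew (e i * w * e i) a, h3]
    simp [TensorProduct.comm_tmul, neg_sub]
  rw [h4]
  simp only [brFn, map_sub, TensorProduct.lift.tmul, pairFn, LinearMap.mk₂_apply]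
  funext ρ
  have hei : ρ.1 (e i) = blockOne K I d i := ρ.2 i
  simp only [Pi.sub_apply, Pi.mul_apply, cf, map_mul, hei, blockOne,
    Matrix.mul_diagonal, Matrix.diagonal_mul, Matrix.diagonal_apply]
  by_cases hV : V = (⟨i, p⟩ : Nidx I d) <;> by_cases hU : U = (⟨i, q⟩ : Nidx I d) <;>
    simp [hV, hU, eq_comm, Pi.sub_apply] <;> rfl

end
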